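/- For eigenvalues λ₁,...,λ_d of a matrix all having nonzero real part of the same sign, the elementary symmetric polynomials satisfy: for each m with 1 ≤ m ≤ d-1, (m+1)·|σ_{m+1}(λ)| ≥ (d-m)·c₀·|σ_m(λ)|, where σ_m is the m-th elementary symmetric polynomial and c₀ = min_j |Re(λ_j)|. Moreover |σ₁(λ)| ≥ d·c₀. -/

import Mathlib

open Finset

lemma my_esymm_zero (s : Multiset ℂ) : s.esymm 0 = 1 := by
  simp [Multiset.esymm]

lemma my_esymm_cons (a : ℂ) (s : Multiset ℂ) (n : ℕ) :
    (a ::ₘ s).esymm (n + 1) = a * s.esymm n + s.esymm (n + 1) := by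
  unfold Multiset.esymm
  rw [Multiset.powersetCard_cons, Multiset.map_add, Multiset.sum_add, add_comm]
  congr 1
  rw [Multiset.map_map]
  have : ((s.powersetCard n).map (Multiset.prod ∘ (a ::ₘ ·))).sum
      = ((s.powersetCard n).map (fun t => a * t.prod)).sum := by
    congr 1
    exact Multiset.map_congr rfl (fun t _ => by simp [Multiset.prod_cons])
  rw [this, Multiset.sum_map_mul_left]

lemma my_abs_eq_re {z : ℂ} (h1 : z.im = 0) (h2 : 0 ≤ z.re) : ‖z‖ = z.re := by
  have hz : (z.re : ℂ) = z := Complex.ext (by simp) (by simp [h1])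
  rw [← hz, Complex.norm_real, Real.norm_eq_abs, Complex.ofReal_re]
  exact abs_of_nonneg h2

set_option maxHeartbeats 1000000 in
lemma esymm_key (c₀ : ℝ) (hc : 0 ≤ c₀) : ∀ M : Multiset ℂ,
    M.map (starRingEnd ℂ) = M → (∀ z ∈ M, c₀ ≤ z.re) →
    (∀ k, (M.esymm k).im = 0 ∧ 0 ≤ (M.esymm k).re) ∧
      ∀ m : ℕ, ((Multiset.card M : ℝ) - m) * c₀ * (M.esymm m).re
        ≤ (m + 1) * (M.esymm (m + 1)).re := by
  intro M
  induction M using Multiset.strongInductionOn with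
  | _ M IH =>
  intro hconj hre
  rcases Multiset.empty_or_exists_mem M with h0 | ⟨a, ha⟩
  · subst h0
    constructor
    · rintro (_ | k) <;> simp [Multiset.esymm, Multiset.empty_eq_zero, Multiset.powersetCard_zero_right]
    · rintro (_ | m) <;> simp [Multiset.esymm, Multiset.empty_eq_zero, Multiset.powersetCard_zero_right]
  by_cases him : a.im = 0
  · -- a is real
    set s := M.erase a with hs
    have hMs : a ::ₘ s = M := Multiset.cons_erase ha
    have hconjA : (starRingEnd ℂ) a = a := Complex.conj_eq_iff_im.mpr him
    have hinj : Function.Injective (starRingEnd ℂ) := (starRingEnd ℂ).injective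
    have hconjs : s.map (starRingEnd ℂ) = s := by
      rw [hs, Multiset.map_erase _ hinj, hconj, hconjA]
    have hres : ∀ z ∈ s, c₀ ≤ z.re := fun z hz =>
      hre z (Multiset.mem_of_le (Multiset.erase_le a M) hz)
    obtain ⟨IH1, IH2⟩ := IH s (Multiset.erase_lt.mpr ha) hconjs hres
    have hα : c₀ ≤ a.re := hre a ha
    have hα0 : 0 ≤ a.re := le_trans hc hα
    have hE : ∀ k, (M.esymm (k + 1)).im = 0 ∧
        (M.esymm (k + 1)).re = a.re * (s.esymm k).re + (s.esymm (k + 1)).re := by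
      intro k
      rw [← hMs, my_esymm_cons]
      obtain ⟨hi1, _⟩ := IH1 k
      obtain ⟨hi2, _⟩ := IH1 (k + 1)
      constructor
      · simp [Complex.add_im, Complex.mul_im, him, hi1, hi2]
      · simp [Complex.add_re, Complex.mul_re, him, hi1]
    have hcard : (Multiset.card M : ℝ) = (Multiset.card s : ℝ) + 1 := by
      rw [← hMs]; push_cast [Multiset.card_cons]; ring
    constructor
    · rintro (_ | k)
      · simp [my_esymm_zero]
      · obtain ⟨h1, h2⟩ := hE k
        refine ⟨h1, ?_⟩
        rw [h2]
        have := (IH1 k).2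
        have := (IH1 (k + 1)).2
        nlinarith
    · rintro (_ | m)
      · -- m = 0
        obtain ⟨_, h2⟩ := hE 0
        have h00 := IH2 0
        rw [my_esymm_zero] at h00 ⊢
        rw [hcard, h2, my_esymm_zero]
        simp only [Complex.one_re] at h00 ⊢
        push_cast at h00 ⊢
        nlinarith
      · obtain ⟨_, h2⟩ := hE m
        obtain ⟨_, h3⟩ := hE (m + 1)
        have hk := IH2 m
        have hk1 := IH2 (m + 1)
        have hx := (IH1 m).2
        have hy := (IH1 (m + 1)).2
        have hz := (IH1 (m + 2)).2
        rw [hcard, h2, h3]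
        push_cast at hk hk1 ⊢
        nlinarith [mul_le_mul_of_nonneg_left hk hα0,
          mul_nonneg (sub_nonneg.mpr hα) hy]
  · -- a is not real; pair it with its conjugate
    have hb : (starRingEnd ℂ) a ∈ M := by
      rw [← hconj]; exact Multiset.mem_map_of_mem _ ha
    set b := (starRingEnd ℂ) a with hbdef
    have hne : b ≠ a := fun h => him (Complex.conj_eq_iff_im.mp h)
    have hbmem : b ∈ M.erase a := (Multiset.mem_erase_of_ne hne).mpr hb
    set t := (M.erase a).erase b with ht
    have hM2 : b ::ₘ t = M.erase a := Multiset.cons_erase hbmem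
    have hM1 : a ::ₘ b ::ₘ t = M := by rw [hM2]; exact Multiset.cons_erase ha
    have hinj : Function.Injective (starRingEnd ℂ) := (starRingEnd ℂ).injective
    have hconjt : t.map (starRingEnd ℂ) = t := by
      rw [ht, Multiset.map_erase _ hinj, Multiset.map_erase _ hinj, hconj]
      rw [show (starRingEnd ℂ) b = a from Complex.conj_conj a]
      exact Multiset.erase_comm M b a ▸ rfl
    have hsub : t ≤ M := le_trans (Multiset.erase_le _ _) (Multiset.erase_le _ _)
    have hret : ∀ z ∈ t, c₀ ≤ z.re := fun z hz => hre z (Multiset.mem_of_le hsub hz)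
    have hlt : t < M := lt_of_le_of_lt (Multiset.erase_le _ _) (Multiset.erase_lt.mpr ha)
    obtain ⟨IH1, IH2⟩ := IH t hlt hconjt hret
    have hα : c₀ ≤ a.re := hre a ha
    have hα0 : 0 ≤ a.re := le_trans hc hα
    set α := a.re with hαdef
    set β := a.im with hβdef
    have hbre : b.re = α := Complex.conj_re a
    have hbim : b.im = -β := Complex.conj_im a
    set r := α ^ 2 + β ^ 2 with hrdef
    have hr0 : (0:ℝ) ≤ r := by positivity
    have hrα : α * c₀ ≤ r := by nlinarith
    -- complex identities
    have hab_re : (a * b).re = r := by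
      simp [Complex.mul_re, hbre, hbim, hrdef]; ring
    have hab_im : (a * b).im = 0 := by
      simp [Complex.mul_im, hbre, hbim]; ring
    have habs_re : (a + b).re = 2 * α := by simp [Complex.add_re, hbre]; ring
    have habs_im : (a + b).im = 0 := by simp [Complex.add_im, hbim, hβdef]
    have hEc : ∀ k, M.esymm (k + 2) =
        (a * b) * t.esymm k + (a + b) * t.esymm (k + 1) + t.esymm (k + 2) := by
      intro k
      rw [← hM1, show k + 2 = (k + 1) + 1 from rfl, my_esymm_cons, my_esymm_cons,
        my_esymm_cons]
      ring
    have hE : ∀ k, (M.esymm (k + 2)).im = 0 ∧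
        (M.esymm (k + 2)).re = r * (t.esymm k).re + 2 * α * (t.esymm (k + 1)).re
          + (t.esymm (k + 2)).re := by
      intro k
      rw [hEc k]
      obtain ⟨hi1, _⟩ := IH1 k
      obtain ⟨hi2, _⟩ := IH1 (k + 1)
      obtain ⟨hi3, _⟩ := IH1 (k + 2)
      constructor
      · simp [Complex.add_im, Complex.mul_im, hab_im, hab_re, habs_im, habs_re,
          hi1, hi2, hi3]
      · simp [Complex.add_re, Complex.mul_re, hab_im, hab_re, habs_im, habs_re,
          hi1, hi2]
    have hE1 : (M.esymm 1).im = 0 ∧ (M.esymm 1).re = 2 * α + (t.esymm 1).re := by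
      rw [← hM1, show (a ::ₘ b ::ₘ t).esymm 1 = (a ::ₘ b ::ₘ t).esymm (0 + 1) from rfl, my_esymm_cons, my_esymm_cons,
        my_esymm_zero]
      obtain ⟨hi1, _⟩ := IH1 1
      constructor
      · simp only [Complex.add_im, Complex.mul_im, my_esymm_zero, Complex.one_re,
          Complex.one_im, hbim, hbre, hi1]
        ring
      · simp only [Complex.add_re, Complex.mul_re, my_esymm_zero, Complex.one_re,
          Complex.one_im, hbim, hbre, hi1]
        ring
    have hcard : (Multiset.card M : ℝ) = (Multiset.card t : ℝ) + 2 := by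
      rw [← hM1]; push_cast [Multiset.card_cons]; ring
    constructor
    · rintro (_ | (_ | k))
      · simp [my_esymm_zero]
      · obtain ⟨h1, h2⟩ := hE1
        refine ⟨h1, ?_⟩
        rw [h2]
        have := (IH1 1).2
        nlinarith
      · obtain ⟨h1, h2⟩ := hE k
        refine ⟨h1, ?_⟩
        rw [h2]
        have := (IH1 k).2
        have := (IH1 (k + 1)).2
        have := (IH1 (k + 2)).2
        nlinarith
    · rintro (_ | (_ | m))
      · -- m = 0
        obtain ⟨_, h2⟩ := hE1
        have h00 := IH2 0
        rw [my_esymm_zero] at h00 ⊢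
        rw [hcard, h2]
        simp only [Complex.one_re] at h00 ⊢
        push_cast at h00 ⊢
        nlinarith
      · -- m = 1
        obtain ⟨_, h1⟩ := hE1
        obtain ⟨_, h2⟩ := hE 0
        have h00 := IH2 0
        have h11 := IH2 1
        rw [my_esymm_zero] at h00 h2
        simp only [Complex.one_re] at h00 h2
        have hx := (IH1 1).2
        have hy := (IH1 2).2
        rw [hcard, h1, h2]
        push_cast at h00 h11 ⊢
        nlinarith [mul_le_mul_of_nonneg_left h00 hα0,
          mul_nonneg (sub_nonneg.mpr hα) hx]
      · -- m = k + 2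
        obtain ⟨_, h2⟩ := hE m
        obtain ⟨_, h3⟩ := hE (m + 1)
        have hk := IH2 m
        have hk1 := IH2 (m + 1)
        have hk2 := IH2 (m + 2)
        have hw := (IH1 m).2
        have hx := (IH1 (m + 1)).2
        have hy := (IH1 (m + 2)).2
        have hz := (IH1 (m + 3)).2
        rw [hcard, h2, h3]
        push_cast at hk hk1 hk2 ⊢
        nlinarith [mul_le_mul_of_nonneg_left hk hr0,
          mul_le_mul_of_nonneg_left hk1 hα0,
          mul_nonneg (sub_nonneg.mpr hrα) hx,
          mul_nonneg (sub_nonneg.mpr hα) hy,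
          mul_nonneg (mul_nonneg hα0 hc) hx]

/-- For a conjugation-closed family `λ₁,…,λ_d` of complex numbers with nonzero real parts
all of the same sign, the elementary symmetric functions satisfy
`(m+1)|σ_{m+1}| ≥ (d-m) c₀ |σ_m|` for `1 ≤ m ≤ d-1`, and `|σ₁| ≥ d c₀`,
where `c₀ = min_j |Re λ_j|`. -/
theorem esymm_growth {d : ℕ} (hd : 0 < d) (l : Fin d → ℂ)
    (hconj : ∃ π : Equiv.Perm (Fin d), ∀ j, l (π j) = (starRingEnd ℂ) (l j))
    (hsign : (∀ j, 0 < (l j).re) ∨ (∀ j, (l j).re < 0))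
    (c₀ : ℝ) (hc₀ : ∀ j, c₀ ≤ |(l j).re|)
    (σ : ℕ → ℂ)
    (hσ : ∀ m, σ m = ∑ t ∈ Finset.univ.powersetCard m, ∏ j ∈ t, l j) :
    (∀ m : ℕ, 1 ≤ m → m ≤ d - 1 →
        (d - m : ℝ) * c₀ * ‖σ m‖ ≤ (m + 1 : ℝ) * ‖σ (m + 1)‖) ∧
      (d : ℝ) * c₀ ≤ ‖σ 1‖ := by
  set M : Multiset ℂ := Finset.univ.val.map l with hMdef
  have hMσ : ∀ m, σ m = M.esymm m := fun m => by rw [hσ m, Finset.esymm_map_val]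
  obtain ⟨π, hπ⟩ := hconj
  have huniv : Finset.univ.val.map ⇑π = Finset.univ.val := by
    have := Finset.map_univ_equiv π
    calc Finset.univ.val.map ⇑π = (Finset.univ.map π.toEmbedding).val := rfl
      _ = Finset.univ.val := by rw [this]
  have hMconj : M.map (starRingEnd ℂ) = M := by
    rw [hMdef, Multiset.map_map]
    conv_rhs => rw [← huniv, Multiset.map_map]
    exact Multiset.map_congr rfl (fun j _ => (hπ j).symm)
  have hMcard : (Multiset.card M : ℝ) = d := by simp [hMdef]
  rcases le_or_gt c₀ 0 with hc | hc
  · constructor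
    · intro m hm1 hm2
      have hmd : (m : ℝ) ≤ d := by
        have : m ≤ d := le_trans hm2 (Nat.sub_le d 1)
        exact_mod_cast this
      have h3 : 0 ≤ ((d : ℝ) - m) * ‖σ m‖ :=
        mul_nonneg (by linarith) (norm_nonneg _)
      have h1 : (d - m : ℝ) * c₀ * ‖σ m‖ ≤ 0 := by nlinarith [h3, hc]
      have h2 : (0:ℝ) ≤ (m + 1 : ℝ) * ‖σ (m + 1)‖ := by positivity
      linarith
    · have hdp : (0:ℝ) < d := by exact_mod_cast hd
      have h4 : (d:ℝ) * c₀ ≤ 0 := mul_nonpos_iff.mpr (Or.inl ⟨le_of_lt hdp, hc⟩)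
      linarith [norm_nonneg (σ 1)]
  · -- c₀ > 0
    have hc' : 0 ≤ c₀ := le_of_lt hc
    obtain ⟨N, hNcard, hNconj, hNre, hNabs⟩ :
        ∃ N : Multiset ℂ, (Multiset.card N : ℝ) = d ∧
          N.map (starRingEnd ℂ) = N ∧ (∀ z ∈ N, c₀ ≤ z.re) ∧
          ∀ k, ‖σ k‖ = ‖N.esymm k‖ := by
      rcases hsign with hpos | hneg
      · refine ⟨M, hMcard, hMconj, ?_, fun k => by rw [hMσ k]⟩
        intro z hz
        obtain ⟨j, _, rfl⟩ := Multiset.mem_map.mp hz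
        have := hc₀ j
        rwa [abs_of_pos (hpos j)] at this
      · refine ⟨M.map Neg.neg, by simpa using hMcard, ?_, ?_, ?_⟩
        · rw [Multiset.map_map]
          have : (M.map (starRingEnd ℂ)).map Neg.neg = M.map ((starRingEnd ℂ) ∘ Neg.neg) := by
            rw [Multiset.map_map]
            exact Multiset.map_congr rfl (fun z _ => by simp)
          rw [← this, hMconj]
        · intro z hz
          obtain ⟨w, hw, rfl⟩ := Multiset.mem_map.mp hz
          obtain ⟨j, _, rfl⟩ := Multiset.mem_map.mp hw
          have := hc₀ j
          rw [abs_of_neg (hneg j)] at this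
          simpa using this
        · intro k
          rw [hMσ k, Multiset.esymm_neg]
          simp [map_mul, map_pow]
    obtain ⟨hreal, hineq⟩ := esymm_key c₀ hc' N hNconj hNre
    have habs : ∀ k, ‖σ k‖ = (N.esymm k).re := fun k => by
      rw [hNabs k, my_abs_eq_re (hreal k).1 (hreal k).2]
    constructor
    · intro m _ _
      rw [habs m, habs (m + 1)]
      have := hineq m
      rw [hNcard] at this
      exact this
    · have := hineq 0
      rw [hNcard, my_esymm_zero] at this
      simp only [Complex.one_re] at this
      rw [habs 1]
      push_cast at this
      linarith
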